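/- arXiv:1908.02415 — 6 statements merged into one kernel-verified Lean document; each statement's English description precedes it below -/
import Mathlib

section
/- Let n, r be natural numbers with 1 ≤ r and 2r − 1 ≤ n, let A = {0, 1, …, r−1} viewed as a subset of ZMod n, and for s ∈ ZMod n let s + A = {s + a : a ∈ A}. Then: (i) exactly one s ∈ ZMod n (namely s = 0) satisfies |(s + A) ∩ A| = r; (ii) for every k with 1 ≤ k ≤ r − 1, exactly two elements s ∈ ZMod n satisfy |(s + A) ∩ A| = k; (iii) exactly n − 2r + 1 elements s ∈ ZMod n satisfy (s + A) ∩ A = ∅. -/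
open Finset

private lemma rr_count_eq (n r : ℕ) (hr : 1 ≤ r) (hrn : 2 * r - 1 ≤ n) (m : ℕ) (hm : m < n) :
    ((range r).filter (fun a => (m + a) % n < r)).card =
      if m < r then r - m else if m ≤ n - r then 0 else m - (n - r) := by
  have hrle : r ≤ n := by omega
  split_ifs with h1 h2
  · have hfe : (range r).filter (fun a => (m + a) % n < r) = range (r - m) := by
      ext a
      simp only [mem_filter, mem_range]
      constructor
      · rintro ⟨ha, hc⟩
        rw [Nat.mod_eq_of_lt (by omega)] at hc
        omega
      · intro ha
        refine ⟨by omega, ?_⟩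
        rw [Nat.mod_eq_of_lt (by omega)]
        omega
    rw [hfe, card_range]
  · rw [card_eq_zero, filter_eq_empty_iff]
    intro a ha
    simp only [mem_range] at ha
    rw [Nat.mod_eq_of_lt (by omega)]
    omega
  · have hfe : (range r).filter (fun a => (m + a) % n < r) = Ico (n - m) r := by
      ext a
      simp only [mem_filter, mem_range, mem_Ico]
      constructor
      · rintro ⟨ha, hc⟩
        refine ⟨?_, ha⟩
        by_contra hlt
        push_neg at hlt
        rw [Nat.mod_eq_of_lt (by omega)] at hc
        omega
      · rintro ⟨ha1, ha2⟩
        refine ⟨ha2, ?_⟩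
        rw [Nat.mod_eq_sub_mod (by omega), Nat.mod_eq_of_lt (by omega)]
        omega
    rw [hfe, Nat.card_Ico]
    omega

private lemma rr_overlap_card (n r : ℕ) [NeZero n] (hr : 1 ≤ r) (hrn : 2 * r - 1 ≤ n)
    (s : ZMod n) :
    (((range r).image (Nat.cast : ℕ → ZMod n)).image (fun a => s + a) ∩
        (range r).image (Nat.cast : ℕ → ZMod n)).card =
      ((range r).filter (fun a => (s.val + a) % n < r)).card := by
  have hrle : r ≤ n := by omega
  set A : Finset (ZMod n) := (range r).image (Nat.cast : ℕ → ZMod n) with hA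
  have hmemA : ∀ x : ZMod n, x ∈ A ↔ x.val < r := by
    intro x
    simp only [hA, mem_image, mem_range]
    constructor
    · rintro ⟨a, ha, rfl⟩
      rw [ZMod.val_cast_of_lt (by omega)]
      exact ha
    · intro h
      exact ⟨x.val, h, ZMod.natCast_rightInverse x⟩
  have hinj : Function.Injective (fun a : ZMod n => s + a) := fun a b h => by
    simpa using h
  have h1 : A.image (fun a => s + a) ∩ A =
      (A.filter (fun a => s + a ∈ A)).image (fun a => s + a) := by
    rw [← Finset.filter_mem_eq_inter, Finset.filter_image]
  rw [h1, card_image_of_injective _ hinj]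
  have h2 : A.filter (fun a => s + a ∈ A) =
      ((range r).filter (fun a : ℕ => s + (a : ZMod n) ∈ A)).image (Nat.cast : ℕ → ZMod n) := by
    rw [hA]; exact Finset.filter_image
  rw [h2, card_image_of_injOn]
  · congr 1
    apply Finset.filter_congr
    intro a ha
    simp only [mem_range] at ha
    rw [hmemA, ZMod.val_add, ZMod.val_cast_of_lt (by omega : a < n)]
  · intro a ha b hb hab
    simp only [Finset.coe_filter, Set.mem_setOf_eq, mem_range] at ha hb
    have : ((a : ZMod n)).val = ((b : ZMod n)).val := by rw [hab]
    rwa [ZMod.val_cast_of_lt (by omega), ZMod.val_cast_of_lt (by omega)] at this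

/-- Let `1 ≤ r`, `2r - 1 ≤ n`, and `A = {0, …, r-1} ⊆ ZMod n`. Then:
(i) exactly one `s` (namely `s = 0`) satisfies `|(s + A) ∩ A| = r`;
(ii) for every `1 ≤ k ≤ r - 1`, exactly two `s` satisfy `|(s + A) ∩ A| = k`;
(iii) exactly `n - 2r + 1` elements `s` satisfy `(s + A) ∩ A = ∅`. -/
theorem round_robin_overlap_distribution (n r : ℕ) [NeZero n] (hr : 1 ≤ r)
    (hrn : 2 * r - 1 ≤ n) :
    (Finset.univ.filter (fun s : ZMod n =>
        (((Finset.range r).image (Nat.cast : ℕ → ZMod n)).image (fun a => s + a) ∩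
            (Finset.range r).image (Nat.cast : ℕ → ZMod n)).card = r) = {0}) ∧
    (∀ k : ℕ, 1 ≤ k → k ≤ r - 1 →
      (Finset.univ.filter (fun s : ZMod n =>
          (((Finset.range r).image (Nat.cast : ℕ → ZMod n)).image (fun a => s + a) ∩
              (Finset.range r).image (Nat.cast : ℕ → ZMod n)).card = k)).card = 2) ∧
    ((Finset.univ.filter (fun s : ZMod n =>
        ((Finset.range r).image (Nat.cast : ℕ → ZMod n)).image (fun a => s + a) ∩
            (Finset.range r).image (Nat.cast : ℕ → ZMod n) = ∅)).card : ℤ) =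
      (n : ℤ) - 2 * r + 1 := by
  have hrle : r ≤ n := by omega
  have key : ∀ s : ZMod n,
      (((Finset.range r).image (Nat.cast : ℕ → ZMod n)).image (fun a => s + a) ∩
          (Finset.range r).image (Nat.cast : ℕ → ZMod n)).card =
        if s.val < r then r - s.val else if s.val ≤ n - r then 0 else s.val - (n - r) := by
    intro s
    rw [rr_overlap_card n r hr hrn s, rr_count_eq n r hr hrn s.val s.val_lt]
  refine ⟨?_, ?_, ?_⟩
  · ext s
    simp only [mem_filter, mem_univ, true_and, mem_singleton, key]
    rw [← ZMod.val_eq_zero]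
    have := s.val_lt
    split_ifs <;> omega
  · intro k hk1 hk2
    have hiff : ∀ s : ZMod n,
        ((((Finset.range r).image (Nat.cast : ℕ → ZMod n)).image (fun a => s + a) ∩
            (Finset.range r).image (Nat.cast : ℕ → ZMod n)).card = k) ↔
          (s.val = r - k ∨ s.val = n - r + k) := by
      intro s
      rw [key]
      have := s.val_lt
      split_ifs <;> omega
    have hset : Finset.univ.filter (fun s : ZMod n =>
        (((Finset.range r).image (Nat.cast : ℕ → ZMod n)).image (fun a => s + a) ∩
            (Finset.range r).image (Nat.cast : ℕ → ZMod n)).card = k) =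
        {((r - k : ℕ) : ZMod n), ((n - r + k : ℕ) : ZMod n)} := by
      ext s
      simp only [mem_filter, mem_univ, true_and, mem_insert, mem_singleton, hiff]
      have h1 : (((r - k : ℕ) : ZMod n)).val = r - k := ZMod.val_cast_of_lt (by omega)
      have h2 : (((n - r + k : ℕ) : ZMod n)).val = n - r + k := ZMod.val_cast_of_lt (by omega)
      constructor
      · rintro (h | h)
        · left
          have : s.val = (((r - k : ℕ) : ZMod n)).val := by rw [h1]; exact h
          exact ZMod.val_injective n this
        · right
          have : s.val = (((n - r + k : ℕ) : ZMod n)).val := by rw [h2]; exact h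
          exact ZMod.val_injective n this
      · rintro (rfl | rfl)
        · left; exact h1
        · right; exact h2
    rw [hset]
    rw [Finset.card_insert_of_notMem, Finset.card_singleton]
    simp only [mem_singleton]
    intro h
    have h1 : (((r - k : ℕ) : ZMod n)).val = r - k := ZMod.val_cast_of_lt (by omega)
    have h2 : (((n - r + k : ℕ) : ZMod n)).val = n - r + k := ZMod.val_cast_of_lt (by omega)
    rw [h] at h1
    omega
  · have hset : Finset.univ.filter (fun s : ZMod n =>
        ((Finset.range r).image (Nat.cast : ℕ → ZMod n)).image (fun a => s + a) ∩
            (Finset.range r).image (Nat.cast : ℕ → ZMod n) = ∅) =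
        (Finset.Icc r (n - r)).image (Nat.cast : ℕ → ZMod n) := by
      ext s
      simp only [mem_filter, mem_univ, true_and, mem_image, Finset.mem_Icc,
        ← Finset.card_eq_zero, key]
      have := s.val_lt
      constructor
      · intro h
        refine ⟨s.val, ?_, ZMod.natCast_rightInverse s⟩
        split_ifs at h <;> omega
      · rintro ⟨m, hm, rfl⟩
        rw [ZMod.val_cast_of_lt (by omega)]
        split_ifs <;> omega
    rw [hset, card_image_of_injOn, Nat.card_Icc]
    · omega
    · intro a ha b hb hab
      simp only [Finset.coe_Icc, Set.mem_Icc] at ha hb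
      have : ((a : ZMod n)).val = ((b : ZMod n)).val := by rw [hab]
      rwa [ZMod.val_cast_of_lt (by omega), ZMod.val_cast_of_lt (by omega)] at this
end

section
/- Let n, r be natural numbers with 1 ≤ r and 2r − 1 ≤ n, and let A = {0, 1, …, r−1} viewed as a subset of ZMod n. Then 3 · Σ_{s ∈ ZMod n} |(s + A) ∩ A|² = 2r³ + r. (This yields the redundancy diversity factor of round-robin scheduling: E[X²] → (2r³ + r)/(3n) as T → ∞, i.e., RDF_round-robin = 3n/(2r³ + r).) -/
open Finset

private lemma rr_castinj {n : ℕ} [NeZero n] {a b : ℕ} (ha : a < n) (hb : b < n)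
    (h : (a : ZMod n) = b) : a = b := by
  have := congrArg ZMod.val h
  rwa [ZMod.val_cast_of_lt ha, ZMod.val_cast_of_lt hb] at this

private lemma rr_L1 {α β : Type*} [DecidableEq α] [DecidableEq β] (B : Finset α) (f : α → β)
    (S : Finset β) (hf : ∀ x ∈ B, f x ∈ S) :
    ∑ s ∈ S, ((B.filter (fun x => f x = s)).card) ^ 2 =
      ((B ×ˢ B).filter (fun pq => f pq.1 = f pq.2)).card := by
  rw [Finset.card_eq_sum_card_fiberwise (f := fun pq => f pq.1) (t := S)
    (fun x hx => hf _ (Finset.mem_product.mp (Finset.mem_filter.mp hx).1).1)]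
  refine Finset.sum_congr rfl fun s _ => ?_
  rw [Finset.filter_filter, sq, ← Finset.card_product, ← Finset.filter_product]
  congr 1
  apply Finset.filter_congr
  intro x _
  constructor
  · rintro ⟨h1, h2⟩; exact ⟨h1.trans h2.symm, h1⟩
  · rintro ⟨h1, h2⟩; exact ⟨h2, h1 ▸ h2⟩

private lemma rr_sumsq (m : ℕ) :
    6 * ∑ t ∈ Finset.range m, (t + 1) ^ 2 = m * (m + 1) * (2 * m + 1) := by
  induction m with
  | zero => simp
  | succ k ih => rw [Finset.sum_range_succ, Nat.mul_add, ih]; ring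

/-- Let `1 ≤ r`, `2r - 1 ≤ n`, and `A = {0, …, r-1} ⊆ ZMod n`. Then
`3 · Σ_{s ∈ ZMod n} |(s + A) ∩ A|² = 2r³ + r`.
(This yields `RDF_round-robin = 3n/(2r³ + r)`.) -/
theorem round_robin_total_squared_overlap (n r : ℕ) [NeZero n] (hr : 1 ≤ r)
    (hrn : 2 * r - 1 ≤ n) :
    3 * ∑ s : ZMod n,
        (((Finset.range r).image (Nat.cast : ℕ → ZMod n)).image (fun a => s + a) ∩
            (Finset.range r).image (Nat.cast : ℕ → ZMod n)).card ^ 2 =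
      2 * r ^ 3 + r := by
  have hrle : r ≤ n := by omega
  set B : Finset (ℕ × ℕ) := (Finset.range r) ×ˢ (Finset.range r) with hB
  -- Step A: identify each intersection cardinality with a fiber of (a,b) ↦ b - a
  have hA : ∀ s : ZMod n,
      (((Finset.range r).image (Nat.cast : ℕ → ZMod n)).image (fun a => s + a) ∩
          (Finset.range r).image (Nat.cast : ℕ → ZMod n)).card
        = (B.filter (fun p => ((p.2 : ZMod n) - (p.1 : ℕ)) = s)).card := by
    intro s
    symm
    apply Finset.card_bij (fun p _ => ((p.2 : ℕ) : ZMod n))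
    · rintro ⟨a, b⟩ hp
      simp only [hB, Finset.mem_filter, Finset.mem_product, Finset.mem_range] at hp
      obtain ⟨⟨ha, hb⟩, hcond⟩ := hp
      refine Finset.mem_inter.mpr ⟨?_, ?_⟩
      · refine Finset.mem_image.mpr ⟨(a : ZMod n),
          Finset.mem_image.mpr ⟨a, Finset.mem_range.mpr ha, rfl⟩, ?_⟩
        have : (b : ZMod n) = s + a := by rw [← hcond]; ring
        exact this.symm
      · exact Finset.mem_image.mpr ⟨b, Finset.mem_range.mpr hb, rfl⟩
    · rintro ⟨a, b⟩ hp ⟨a', b'⟩ hp' h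
      simp only [hB, Finset.mem_filter, Finset.mem_product, Finset.mem_range] at hp hp'
      have hbb : b = b' :=
        rr_castinj (lt_of_lt_of_le hp.1.2 hrle) (lt_of_lt_of_le hp'.1.2 hrle) h
      subst hbb
      have hsub : (b : ZMod n) - a = (b : ZMod n) - a' := hp.2.trans hp'.2.symm
      have haa : (a : ZMod n) = a' := by
        linear_combination hp'.2 - hp.2
      have : a = a' :=
        rr_castinj (lt_of_lt_of_le hp.1.1 hrle) (lt_of_lt_of_le hp'.1.1 hrle) haa
      simp [this]
    · intro x hx
      obtain ⟨hx1, hx2⟩ := Finset.mem_inter.mp hx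
      obtain ⟨y, hy, hxy⟩ := Finset.mem_image.mp hx1
      obtain ⟨a, ha, hay⟩ := Finset.mem_image.mp hy
      obtain ⟨b, hb, hbx⟩ := Finset.mem_image.mp hx2
      refine ⟨(a, b), ?_, hbx⟩
      simp only [hB, Finset.mem_filter, Finset.mem_product, Finset.mem_range]
      refine ⟨⟨Finset.mem_range.mp ha, Finset.mem_range.mp hb⟩, ?_⟩
      rw [hbx, ← hxy, ← hay]
      ring
  -- Step B: the total square-sum equals the square-sum of fibers of (a,b) ↦ a + b over ℕ
  have key : (∑ s : ZMod n,
      (((Finset.range r).image (Nat.cast : ℕ → ZMod n)).image (fun a => s + a) ∩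
          (Finset.range r).image (Nat.cast : ℕ → ZMod n)).card ^ 2)
      = ∑ t ∈ Finset.range (2 * r - 1), (B.filter (fun p => p.1 + p.2 = t)).card ^ 2 := by
    have e1 : (∑ s : ZMod n,
        (((Finset.range r).image (Nat.cast : ℕ → ZMod n)).image (fun a => s + a) ∩
            (Finset.range r).image (Nat.cast : ℕ → ZMod n)).card ^ 2)
        = ∑ s ∈ Finset.univ,
            (B.filter (fun p => ((p.2 : ZMod n) - (p.1 : ℕ)) = s)).card ^ 2 :=
      Finset.sum_congr rfl fun s _ => by rw [hA s]
    rw [e1, rr_L1 B (fun p => ((p.2 : ZMod n) - (p.1 : ℕ))) Finset.univ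
        (fun _ _ => Finset.mem_univ _),
      rr_L1 B (fun p => p.1 + p.2) (Finset.range (2 * r - 1))
        (by
          rintro ⟨a, b⟩ hx
          simp only [hB, Finset.mem_product, Finset.mem_range] at hx
          simp only [Finset.mem_range]
          omega)]
    -- swap bijection ((a,b),(a',b')) ↦ ((a,b'),(a',b))
    refine Finset.card_bij' (fun q _ => ((q.1.1, q.2.2), (q.2.1, q.1.2)))
      (fun q _ => ((q.1.1, q.2.2), (q.2.1, q.1.2))) ?_ ?_ (fun _ _ => rfl) (fun _ _ => rfl)
    · rintro ⟨⟨a, b⟩, ⟨a', b'⟩⟩ hq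
      simp only [hB, Finset.mem_filter, Finset.mem_product, Finset.mem_range] at hq ⊢
      obtain ⟨⟨⟨ha, hb⟩, ⟨ha', hb'⟩⟩, hcond⟩ := hq
      refine ⟨⟨⟨ha, hb'⟩, ⟨ha', hb⟩⟩, ?_⟩
      have h2 : (b : ZMod n) + a' = (b' : ZMod n) + a :=
        sub_eq_sub_iff_add_eq_add.mp hcond
      have h3 : ((b + a' : ℕ) : ZMod n) = ((b' + a : ℕ) : ZMod n) := by push_cast; exact h2
      have h4 : b + a' = b' + a := rr_castinj (by omega) (by omega) h3
      omega
    · rintro ⟨⟨a, b⟩, ⟨a', b'⟩⟩ hq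
      simp only [hB, Finset.mem_filter, Finset.mem_product, Finset.mem_range] at hq ⊢
      obtain ⟨⟨⟨ha, hb⟩, ⟨ha', hb'⟩⟩, hcond⟩ := hq
      refine ⟨⟨⟨ha, hb'⟩, ⟨ha', hb⟩⟩, ?_⟩
      rw [sub_eq_sub_iff_add_eq_add]
      have h4 : b' + a' = b + a := by omega
      have h3 : ((b' + a' : ℕ) : ZMod n) = ((b + a : ℕ) : ZMod n) :=
        congrArg (Nat.cast : ℕ → ZMod n) h4
      push_cast at h3
      linear_combination h3
  rw [key]
  -- Step C: compute the fiber cardinalities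
  have hct : ∀ t, (B.filter (fun p => p.1 + p.2 = t)).card
      = min (r - 1) t + 1 - (t - (r - 1)) := by
    intro t
    have himg : B.filter (fun p => p.1 + p.2 = t)
        = (Finset.Icc (t - (r - 1)) (min (r - 1) t)).image (fun a => (a, t - a)) := by
      ext ⟨a, b⟩
      simp only [hB, Finset.mem_filter, Finset.mem_product, Finset.mem_range,
        Finset.mem_image, Finset.mem_Icc, Prod.mk.injEq]
      constructor
      · rintro ⟨⟨ha, hb⟩, hab⟩
        exact ⟨a, ⟨by omega, by omega⟩, rfl, by omega⟩
      · rintro ⟨x, ⟨hx1, hx2⟩, rfl, rfl⟩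
        omega
    rw [himg, Finset.card_image_of_injOn
      (fun x _ y _ h => by simpa using congrArg Prod.fst h), Nat.card_Icc]
  simp only [hct]
  -- Step D: arithmetic
  obtain ⟨m, rfl⟩ : ∃ m, r = m + 1 := ⟨r - 1, by omega⟩
  have h2r : 2 * (m + 1) - 1 = 2 * m + 1 := by omega
  rw [h2r]
  have hsplit : ∑ t ∈ Finset.range (2 * m + 1),
      (min (m + 1 - 1) t + 1 - (t - (m + 1 - 1))) ^ 2
      = (∑ t ∈ Finset.range (m + 1), (t + 1) ^ 2)
        + ∑ t ∈ Finset.range m, (t + 1) ^ 2 := by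
    rw [Finset.range_eq_Ico, ← Finset.sum_Ico_consecutive _ (Nat.zero_le (m + 1)) (by omega)]
    congr 1
    · rw [← Finset.range_eq_Ico]
      refine Finset.sum_congr rfl fun t ht => ?_
      have := Finset.mem_range.mp ht
      congr 1
      omega
    · rw [Finset.sum_Ico_eq_sum_range]
      have hm : 2 * m + 1 - (m + 1) = m := by omega
      rw [hm]
      rw [← Finset.sum_range_reflect (fun j => (j + 1) ^ 2) m]
      refine Finset.sum_congr rfl fun t ht => ?_
      have := Finset.mem_range.mp ht
      congr 1
      omega
  rw [hsplit]
  have e1 := rr_sumsq (m + 1)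
  have e2 := rr_sumsq m
  set S1 := ∑ t ∈ Finset.range (m + 1), (t + 1) ^ 2 with hS1
  set S2 := ∑ t ∈ Finset.range m, (t + 1) ^ 2 with hS2
  have hfin : 2 * (3 * (S1 + S2)) = 2 * (2 * (m + 1) ^ 3 + (m + 1)) := by
    have : 2 * (3 * (S1 + S2)) = 6 * S1 + 6 * S2 := by ring
    rw [this, e1, e2]; ring
  exact Nat.eq_of_mul_eq_mul_left (by norm_num) hfin
end

section
/- Let n, r, T be positive natural numbers with r ≤ n, gcd(r, n) = 1 and n dividing T. For 0 ≤ i < T let S_i = {(i·r + j) mod n : 0 ≤ j < r} be the round-robin server set of job i. Then n · Σ_{i=1}^{T−1} |S_i ∩ S_0| = T·r² − n·r; equivalently, the total overlap of the T − 1 later jobs with the initial job equals (T/n)·r² − r. -/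
open Finset

-- f i = card of intersection
private def rrF (n r i : ℕ) : ℕ :=
  (((Finset.range r).image (fun j => (i * r + j) % n) ∩
      (Finset.range r).image (fun j => (0 * r + j) % n)).card)

private lemma rr_S0 (n r : ℕ) (hrn : r ≤ n) :
    (Finset.range r).image (fun j => (0 * r + j) % n) = Finset.range r := by
  ext x
  simp only [Finset.mem_image, Finset.mem_range, Nat.zero_mul, Nat.zero_add]
  constructor
  · rintro ⟨j, hj, rfl⟩
    simpa [Nat.mod_eq_of_lt (lt_of_lt_of_le hj hrn)] using hj
  · intro hx
    exact ⟨x, hx, by simp [Nat.mod_eq_of_lt (lt_of_lt_of_le hx hrn)]⟩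

private lemma rr_inj (n r i : ℕ) (hrn : r ≤ n) :
    Set.InjOn (fun j => (i * r + j) % n) (Finset.range r : Set ℕ) := by
  intro a ha b hb h
  simp only [Finset.coe_range, Set.mem_Iio] at ha hb
  have h' : a ≡ b [MOD n] := Nat.ModEq.add_left_cancel' (i * r) h
  have := h'
  unfold Nat.ModEq at this
  rwa [Nat.mod_eq_of_lt (lt_of_lt_of_le ha hrn),
    Nat.mod_eq_of_lt (lt_of_lt_of_le hb hrn)] at this

private lemma rr_filter (n r i : ℕ) (hrn : r ≤ n) :
    rrF n r i = ((Finset.range r).filter (fun j => (i * r + j) % n < r)).card := by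
  unfold rrF
  rw [rr_S0 n r hrn]
  have h1 : (Finset.range r).image (fun j => (i * r + j) % n) ∩ Finset.range r
      = ((Finset.range r).filter (fun j => (i * r + j) % n ∈ Finset.range r)).image
          (fun j => (i * r + j) % n) := by
    rw [← Finset.filter_mem_eq_inter, Finset.filter_image]
  rw [h1, Finset.card_image_of_injOn ((rr_inj n r i hrn).mono (by
    intro x hx; simp only [Finset.coe_filter, Set.mem_setOf_eq] at hx
    simpa using hx.1))]
  congr 1
  apply Finset.filter_congr
  intro x hx
  simp [Finset.mem_range]

private lemma rr_periodic (n r i : ℕ) : rrF n r (i + n) = rrF n r i := by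
  unfold rrF
  congr 2
  apply Finset.image_congr
  intro j _
  show ((i + n) * r + j) % n = (i * r + j) % n
  have h : (i + n) * r + j = (i * r + j) + r * n := by ring
  rw [h, Nat.add_mul_mod_self_right]

private lemma rr_periodic' (n r i k : ℕ) : rrF n r (i + n * k) = rrF n r i := by
  induction k with
  | zero => simp
  | succ m ih =>
      have : i + n * (m + 1) = (i + n * m) + n := by ring
      rw [this, rr_periodic, ih]

private lemma rr_count (n r j : ℕ) (hn : 0 < n) (hrn : r ≤ n) (hgcd : Nat.gcd r n = 1) :
    ((Finset.range n).filter (fun i => (i * r + j) % n < r)).card = r := by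
  set h : ℕ → ℕ := fun i => (i * r + j) % n with hh
  have hinj : Set.InjOn h (Finset.range n : Set ℕ) := by
    intro a ha b hb hab
    simp only [Finset.coe_range, Set.mem_Iio] at ha hb
    have h1 : a * r ≡ b * r [MOD n] := Nat.ModEq.add_right_cancel' j hab
    have h2 : a ≡ b [MOD n] := h1.cancel_right_of_coprime (by rwa [Nat.gcd_comm] at hgcd)
    unfold Nat.ModEq at h2
    rwa [Nat.mod_eq_of_lt ha, Nat.mod_eq_of_lt hb] at h2
  have himg : (Finset.range n).image h = Finset.range n := by
    apply Finset.eq_of_subset_of_card_le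
    · intro x hx
      simp only [Finset.mem_image] at hx
      obtain ⟨a, _, rfl⟩ := hx
      simp [hh, Nat.mod_lt _ hn]
    · rw [Finset.card_image_of_injOn hinj]
  have key : ((Finset.range n).filter (fun i => h i < r)).card
      = (((Finset.range n).image h).filter (fun x => x < r)).card := by
    rw [Finset.filter_image, Finset.card_image_of_injOn (hinj.mono (by
      intro x hx; simp only [Finset.coe_filter, Set.mem_setOf_eq] at hx
      simpa using hx.1))]
  rw [key, himg]
  have : (Finset.range n).filter (fun x => x < r) = Finset.range r := by
    ext x; simp only [Finset.mem_filter, Finset.mem_range]; omega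
  rw [this, Finset.card_range]

private lemma rr_period_sum (n r : ℕ) (hn : 0 < n) (hrn : r ≤ n)
    (hgcd : Nat.gcd r n = 1) :
    ∑ i ∈ Finset.range n, rrF n r i = r * r := by
  have : ∀ i ∈ Finset.range n, rrF n r i
      = ((Finset.range r).filter (fun j => (i * r + j) % n < r)).card := by
    intro i _; exact rr_filter n r i hrn
  rw [Finset.sum_congr rfl this]
  simp only [Finset.card_filter]
  rw [Finset.sum_comm]
  have : ∀ j ∈ Finset.range r,
      (∑ i ∈ Finset.range n, if (i * r + j) % n < r then 1 else 0) = r := by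
    intro j _
    rw [← Finset.card_filter]
    exact rr_count n r j hn hrn hgcd
  rw [Finset.sum_congr rfl this]
  simp [mul_comm]

private lemma rr_total (n r k : ℕ) (hn : 0 < n) (hrn : r ≤ n) (hgcd : Nat.gcd r n = 1) :
    ∑ i ∈ Finset.range (n * k), rrF n r i = k * (r * r) := by
  induction k with
  | zero => simp
  | succ m ih =>
      have : n * (m + 1) = n * m + n := by ring
      rw [this, Finset.sum_range_add, ih]
      have : ∀ i ∈ Finset.range n, rrF n r (n * m + i) = rrF n r i := by
        intro i _
        rw [add_comm, rr_periodic']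
      rw [Finset.sum_congr rfl this, rr_period_sum n r hn hrn hgcd]
      ring

private lemma rr_f0 (n r : ℕ) (hrn : r ≤ n) : rrF n r 0 = r := by
  unfold rrF
  rw [rr_S0 n r hrn]
  simp

/-- Round-robin server sets `S_i = {(i*r + j) mod n : 0 ≤ j < r}` with `r ≤ n`,
`gcd(r, n) = 1` and `n ∣ T`. Then `n * Σ_{i=1}^{T-1} |S_i ∩ S_0| = T*r² - n*r`. -/
theorem round_robin_total_overlap_with_initial (n r T : ℕ) (hn : 0 < n) (hr : 0 < r)
    (hT : 0 < T) (hrn : r ≤ n) (hgcd : Nat.gcd r n = 1) (hdvd : n ∣ T) :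
    (n : ℤ) * ∑ i ∈ Finset.Ico 1 T,
        (((Finset.range r).image (fun j => (i * r + j) % n) ∩
            (Finset.range r).image (fun j => (0 * r + j) % n)).card : ℤ) =
      (T : ℤ) * r ^ 2 - n * r := by
  obtain ⟨k, hk⟩ := hdvd
  have hsum : ∑ i ∈ Finset.range T, rrF n r i = k * (r * r) := by
    rw [hk]; exact rr_total n r k hn hrn hgcd
  have hsplit : ∑ i ∈ Finset.range T, rrF n r i
      = rrF n r 0 + ∑ i ∈ Finset.Ico 1 T, rrF n r i := by
    rw [Finset.range_eq_Ico, Finset.sum_eq_sum_Ico_succ_bot hT]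
  have hnat : r + ∑ i ∈ Finset.Ico 1 T, rrF n r i = k * (r * r) := by
    rw [hsum, rr_f0 n r hrn] at hsplit
    exact hsplit.symm
  have hz : (r : ℤ) + ∑ i ∈ Finset.Ico 1 T, (rrF n r i : ℤ) = (k : ℤ) * (r * r) := by
    exact_mod_cast congrArg (Nat.cast : ℕ → ℤ) hnat
  have hgoal : ∑ i ∈ Finset.Ico 1 T,
        (((Finset.range r).image (fun j => (i * r + j) % n) ∩
            (Finset.range r).image (fun j => (0 * r + j) % n)).card : ℤ)
      = ∑ i ∈ Finset.Ico 1 T, (rrF n r i : ℤ) := rfl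
  rw [hgoal]
  have hkZ : (T : ℤ) = (n : ℤ) * k := by exact_mod_cast hk
  nlinarith [hz, hkZ]
end

section
/- Let n, r, T be positive natural numbers with 2r − 1 ≤ n, gcd(r, n) = 1 and n dividing T. For 0 ≤ i < T let S_i = {(i·r + j) mod n : 0 ≤ j < r} be the round-robin server set of job i. Then 3n · Σ_{i=1}^{T−1} |S_i ∩ S_0|² = T·(2r³ + r) − 3n·r²; equivalently, the total squared overlap of the T − 1 later jobs with the initial job equals (T/n)·(2r³ + r)/3 − r². -/
open Finset

private lemma sum_sq_aux (m : ℕ) :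
    6 * ∑ k ∈ range m, (k : ℤ) ^ 2 = m * (m - 1) * (2 * m - 1) := by
  induction m with
  | zero => simp
  | succ m ih =>
    rw [Finset.sum_range_succ, mul_add, ih]
    push_cast
    ring

/-- Round-robin server sets `S_i = {(i*r + j) mod n : 0 ≤ j < r}` with `2r - 1 ≤ n`,
`gcd(r, n) = 1` and `n ∣ T`. Then
`3n * Σ_{i=1}^{T-1} |S_i ∩ S_0|² = T*(2r³ + r) - 3n*r²`. -/
theorem round_robin_total_squared_overlap_with_initial (n r T : ℕ) (hn : 0 < n)
    (hr : 0 < r) (hT : 0 < T) (hrn : 2 * r - 1 ≤ n) (hgcd : Nat.gcd r n = 1)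
    (hdvd : n ∣ T) :
    3 * (n : ℤ) * ∑ i ∈ Finset.Ico 1 T,
        (((Finset.range r).image (fun j => (i * r + j) % n) ∩
            (Finset.range r).image (fun j => (0 * r + j) % n)).card : ℤ) ^ 2 =
      (T : ℤ) * (2 * r ^ 3 + r) - 3 * n * r ^ 2 := by
  haveI : NeZero n := ⟨hn.ne'⟩
  have hrle : r ≤ n := by omega
  obtain ⟨m, hm⟩ := hdvd
  set F : ℕ → Finset ℕ := fun b => (range r).image (fun j => (b + j) % n) with hF
  set c : ℕ → ℕ := fun b => if b < r then r - b else if n - r < b then b + r - n else 0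
    with hc
  -- S_0 is range r
  have hS0 : (range r).image (fun j => (0 * r + j) % n) = range r := by
    ext x
    simp only [mem_image, mem_range, Nat.zero_mul, Nat.zero_add]
    constructor
    · rintro ⟨j, hj, rfl⟩
      exact lt_of_le_of_lt (Nat.mod_le _ _) hj
    · intro hx
      exact ⟨x, hx, Nat.mod_eq_of_lt (lt_of_lt_of_le hx hrle)⟩
  -- cardinality of intersection
  have hcard : ∀ b < n, (F b ∩ range r).card = c b := by
    intro b hb
    by_cases h1 : b < r
    · have heq : F b ∩ range r = Finset.Ico b r := by
        ext x
        simp only [hF, mem_inter, mem_image, mem_range, mem_Ico]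
        constructor
        · rintro ⟨⟨j, hj, rfl⟩, hx⟩
          rw [Nat.mod_eq_of_lt (by omega)] at hx ⊢
          omega
        · rintro ⟨hbx, hxr⟩
          refine ⟨⟨x - b, by omega, ?_⟩, hxr⟩
          rw [Nat.mod_eq_of_lt (by omega)]
          omega
      rw [heq, Nat.card_Ico]
      simp [hc, h1]
    · by_cases h2 : n - r < b
      · have heq : F b ∩ range r = range (b + r - n) := by
          ext x
          simp only [hF, mem_inter, mem_image, mem_range]
          constructor
          · rintro ⟨⟨j, hj, rfl⟩, hx⟩
            by_cases hbj : b + j < n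
            · rw [Nat.mod_eq_of_lt hbj] at hx
              omega
            · have hmod : (b + j) % n = b + j - n := by
                rw [Nat.mod_eq_sub_mod (by omega), Nat.mod_eq_of_lt (by omega)]
              rw [hmod] at hx
              omega
          · intro hx
            refine ⟨⟨x + n - b, by omega, ?_⟩, by omega⟩
            have hxe : b + (x + n - b) = x + n := by omega
            rw [hxe, Nat.add_mod_right, Nat.mod_eq_of_lt (by omega)]
        rw [heq, Finset.card_range]
        simp only [hc]
        rw [if_neg h1, if_pos h2]
      · have heq : F b ∩ range r = ∅ := by
          ext x
          simp only [hF, mem_inter, mem_image, mem_range, Finset.notMem_empty, iff_false]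
          rintro ⟨⟨j, hj, rfl⟩, hx⟩
          rw [Nat.mod_eq_of_lt (by omega)] at hx
          omega
        rw [heq, Finset.card_empty]
        simp only [hc]
        rw [if_neg h1, if_neg h2]
  -- sum of squares of c over a period
  have hsumc : 3 * ∑ b ∈ range n, (c b : ℤ) ^ 2 = 2 * (r : ℤ) ^ 3 + r := by
    have h1 : ∑ b ∈ range n, (c b : ℤ) ^ 2 =
        (∑ b ∈ Finset.Ico 0 r, (c b : ℤ) ^ 2) + ∑ b ∈ Finset.Ico r n, (c b : ℤ) ^ 2 := by
      rw [Finset.sum_Ico_consecutive _ (Nat.zero_le r) hrle, Finset.range_eq_Ico]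
    have h2 : ∑ b ∈ Finset.Ico r n, (c b : ℤ) ^ 2 =
        (∑ b ∈ Finset.Ico r (n - r + 1), (c b : ℤ) ^ 2) +
          ∑ b ∈ Finset.Ico (n - r + 1) n, (c b : ℤ) ^ 2 := by
      rw [Finset.sum_Ico_consecutive _ (by omega) (by omega)]
    have h3 : ∑ b ∈ Finset.Ico r (n - r + 1), (c b : ℤ) ^ 2 = 0 := by
      apply Finset.sum_eq_zero
      intro b hb
      rw [Finset.mem_Ico] at hb
      simp only [hc]
      rw [if_neg (by omega), if_neg (by omega)]
      simp
    -- first block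
    have h4 : ∑ b ∈ Finset.Ico 0 r, (c b : ℤ) ^ 2 = ∑ k ∈ range (r + 1), (k : ℤ) ^ 2 := by
      rw [← Finset.range_eq_Ico, Finset.sum_range_succ']
      simp only [Nat.cast_zero]
      rw [← Finset.sum_range_reflect (fun k => ((k + 1 : ℕ) : ℤ) ^ 2) r]
      have : ∀ b ∈ range r, (c b : ℤ) ^ 2 = ((r - 1 - b + 1 : ℕ) : ℤ) ^ 2 := by
        intro b hb
        rw [Finset.mem_range] at hb
        simp only [hc]
        rw [if_pos hb]
        congr 2
        omega
      rw [Finset.sum_congr rfl this]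
      ring
    have h5 : ∑ b ∈ Finset.Ico (n - r + 1) n, (c b : ℤ) ^ 2 = ∑ k ∈ range r, (k : ℤ) ^ 2 := by
      rw [Finset.sum_Ico_eq_sum_range]
      have hlen : n - (n - r + 1) = r - 1 := by omega
      have hr' : r = (r - 1) + 1 := by omega
      rw [hlen]
      conv_rhs => rw [hr', Finset.sum_range_succ']
      simp only [Nat.cast_zero]
      have : ∀ j ∈ range (r - 1), (c (n - r + 1 + j) : ℤ) ^ 2 = ((j + 1 : ℕ) : ℤ) ^ 2 := by
        intro j hj
        rw [Finset.mem_range] at hj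
        simp only [hc]
        rw [if_neg (by omega), if_pos (by omega)]
        congr 2
        omega
      rw [Finset.sum_congr rfl this]
      ring
    have e1 := sum_sq_aux (r + 1)
    have e2 := sum_sq_aux r
    rw [h1, h2, h3, h4, h5]
    push_cast at e1 e2 ⊢
    nlinarith [e1, e2]
  -- bijection i ↦ i*r % n on range n
  have hbij : ∀ h : ℕ → ℤ, ∑ i ∈ range n, h (i * r % n) = ∑ b ∈ range n, h b := by
    intro h
    have hu : IsUnit (r : ZMod n) := by
      rw [ZMod.isUnit_iff_coprime]
      exact hgcd
    have hinj : ∀ i ∈ range n, ∀ j ∈ range n,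
        (fun i => i * r % n) i = (fun i => i * r % n) j → i = j := by
      intro i hi j hj hij
      rw [Finset.mem_range] at hi hj
      simp only at hij
      have hz : ((i : ZMod n)) * r = (j : ZMod n) * r := by
        have := (ZMod.natCast_eq_natCast_iff' (i * r) (j * r) n).mpr hij
        push_cast at this
        exact this
      have hij' : (i : ZMod n) = j := by
        apply hu.mul_left_cancel
        rw [mul_comm ((r : ZMod n)) (i : ZMod n), mul_comm ((r : ZMod n)) (j : ZMod n)]
        exact hz
      calc i = (i : ZMod n).val := (ZMod.val_cast_of_lt hi).symm
        _ = (j : ZMod n).val := by rw [hij']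
        _ = j := ZMod.val_cast_of_lt hj
    have himg : (range n).image (fun i => i * r % n) = range n := by
      apply Finset.eq_of_subset_of_card_le
      · intro x hx
        simp only [mem_image, mem_range] at hx ⊢
        obtain ⟨i, _, rfl⟩ := hx
        exact Nat.mod_lt _ hn
      · rw [Finset.card_image_of_injOn (fun a ha b hb => hinj a (by simpa using ha) b (by simpa using hb))]
    conv_rhs => rw [← himg]
    rw [Finset.sum_image hinj]
  -- periodic sum over n*m terms
  have hper : ∀ (h : ℕ → ℤ) (k : ℕ),
      ∑ i ∈ range (n * k), h (i % n) = k * ∑ a ∈ range n, h a := by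
    intro h k
    induction k with
    | zero => simp
    | succ k ih =>
      have hsplit : ∑ i ∈ range (n * (k + 1)), h (i % n) =
          (∑ i ∈ range (n * k), h (i % n)) +
            ∑ i ∈ Finset.Ico (n * k) (n * (k + 1)), h (i % n) := by
        rw [Finset.range_eq_Ico, Finset.range_eq_Ico,
          Finset.sum_Ico_consecutive _ (Nat.zero_le _) (Nat.mul_le_mul_left n (Nat.le_succ k : k ≤ k + 1))]
      rw [hsplit, ih]
      have htail : ∑ i ∈ Finset.Ico (n * k) (n * (k + 1)), h (i % n) =
          ∑ a ∈ range n, h a := by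
        rw [Finset.sum_Ico_eq_sum_range]
        have hlen : n * (k + 1) - n * k = n := by ring_nf; omega
        rw [hlen]
        apply Finset.sum_congr rfl
        intro a ha
        rw [Finset.mem_range] at ha
        congr 1
        rw [Nat.mul_add_mod]
        exact Nat.mod_eq_of_lt ha
      rw [htail]
      push_cast
      ring
  -- the summand in terms of c
  have hG : ∀ i : ℕ, (((range r).image (fun j => (i * r + j) % n) ∩
      (range r).image (fun j => (0 * r + j) % n)).card : ℤ) ^ 2 =
      (c (i * r % n) : ℤ) ^ 2 := by
    intro i
    have himg : (range r).image (fun j => (i * r + j) % n) = F (i * r % n) := by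
      apply Finset.image_congr
      intro j _
      simp only
      rw [Nat.mod_add_mod]
    rw [hS0, himg, hcard _ (Nat.mod_lt _ hn)]
  -- assemble
  have hsum : ∑ i ∈ Finset.Ico 1 T,
      (((range r).image (fun j => (i * r + j) % n) ∩
        (range r).image (fun j => (0 * r + j) % n)).card : ℤ) ^ 2 =
      (m : ℤ) * (∑ b ∈ range n, (c b : ℤ) ^ 2) - (r : ℤ) ^ 2 := by
    have hfull : ∑ i ∈ range T,
        (((range r).image (fun j => (i * r + j) % n) ∩
          (range r).image (fun j => (0 * r + j) % n)).card : ℤ) ^ 2 =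
        (m : ℤ) * ∑ b ∈ range n, (c b : ℤ) ^ 2 := by
      calc ∑ i ∈ range T,
          (((range r).image (fun j => (i * r + j) % n) ∩
            (range r).image (fun j => (0 * r + j) % n)).card : ℤ) ^ 2
          = ∑ i ∈ range (n * m), (c ((i % n) * r % n) : ℤ) ^ 2 := by
            rw [← hm]
            apply Finset.sum_congr rfl
            intro i _
            rw [hG]
            congr 2
            rw [Nat.mod_mul_mod]
        _ = (m : ℤ) * ∑ a ∈ range n, (c (a * r % n) : ℤ) ^ 2 :=
            hper (fun a => (c (a * r % n) : ℤ) ^ 2) m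
        _ = (m : ℤ) * ∑ b ∈ range n, (c b : ℤ) ^ 2 := by
            rw [hbij (fun b => (c b : ℤ) ^ 2)]
    have hsplit : ∑ i ∈ range T,
        (((range r).image (fun j => (i * r + j) % n) ∩
          (range r).image (fun j => (0 * r + j) % n)).card : ℤ) ^ 2 =
        (((range r).image (fun j => (0 * r + j) % n) ∩
          (range r).image (fun j => (0 * r + j) % n)).card : ℤ) ^ 2 +
        ∑ i ∈ Finset.Ico 1 T,
          (((range r).image (fun j => (i * r + j) % n) ∩
            (range r).image (fun j => (0 * r + j) % n)).card : ℤ) ^ 2 := by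
      rw [Finset.range_eq_Ico, Finset.sum_eq_sum_Ico_succ_bot hT]
    have h00 : (((range r).image (fun j => (0 * r + j) % n) ∩
        (range r).image (fun j => (0 * r + j) % n)).card : ℤ) ^ 2 = (r : ℤ) ^ 2 := by
      rw [Finset.inter_self, hS0, Finset.card_range]
    rw [hsplit, h00] at hfull
    linarith
  rw [hsum]
  have hTm : (T : ℤ) = (n : ℤ) * m := by exact_mod_cast congrArg Nat.cast hm
  rw [hTm]
  nlinarith [hsumc]
end

section
/- Let r ≥ 2 and n = r(r−1) + 1. Let X be a finite set with |X| = n and let B be a finite family of subsets of X such that every member of B has exactly r elements and every pair of distinct points of X is contained in exactly one member of B. Then any two distinct blocks of B intersect in exactly one point. -/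
/-- In a `(n, r, 1)`-BIBD with `r ≥ 2` and `n = r(r-1) + 1`, any two distinct blocks
intersect in exactly one point. -/
theorem bibd_blocks_intersect_in_one_point {α : Type*} [DecidableEq α] (r n : ℕ)
    (hr : 2 ≤ r) (hn : n = r * (r - 1) + 1) (X : Finset α) (hX : X.card = n)
    (B : Finset (Finset α)) (hsub : ∀ b ∈ B, b ⊆ X) (hsize : ∀ b ∈ B, b.card = r)
    (hpair : ∀ x ∈ X, ∀ y ∈ X, x ≠ y →
      (B.filter (fun b => x ∈ b ∧ y ∈ b)).card = 1) :
    ∀ b₁ ∈ B, ∀ b₂ ∈ B, b₁ ≠ b₂ → (b₁ ∩ b₂).card = 1 := by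
  classical
  -- Any two distinct blocks meet in at most one point.
  have hA : ∀ c ∈ B, ∀ d ∈ B, c ≠ d → (c ∩ d).card ≤ 1 := by
    intro c hc d hd hcd
    by_contra h
    push_neg at h
    obtain ⟨z, hz, w, hw, hzw⟩ := Finset.one_lt_card.mp h
    rw [Finset.mem_inter] at hz hw
    have hzX : z ∈ X := hsub c hc hz.1
    have hwX : w ∈ X := hsub c hc hw.1
    have h1 := hpair z hzX w hwX hzw
    have hsubset : ({c, d} : Finset (Finset α)) ⊆ B.filter (fun b => z ∈ b ∧ w ∈ b) := by
      intro b hb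
      simp only [Finset.mem_insert, Finset.mem_singleton] at hb
      rcases hb with rfl | rfl
      · exact Finset.mem_filter.mpr ⟨hc, hz.1, hw.1⟩
      · exact Finset.mem_filter.mpr ⟨hd, hz.2, hw.2⟩
    have h2 : ({c, d} : Finset (Finset α)).card = 2 := Finset.card_pair hcd
    have h3 := Finset.card_le_card hsubset
    omega
  -- Every point lies in exactly r blocks.
  have hcount : ∀ x ∈ X, (B.filter (fun b => x ∈ b)).card = r := by
    intro x hx
    set Bx := B.filter (fun b => x ∈ b) with hBxdef
    have hmem : ∀ b ∈ Bx, b ∈ B ∧ x ∈ b := fun b hb => Finset.mem_filter.mp hb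
    have hdisj : ∀ c ∈ Bx, ∀ d ∈ Bx, c ≠ d → Disjoint (c.erase x) (d.erase x) := by
      intro c hc d hd hcd
      refine Finset.disjoint_left.mpr ?_
      intro y hyc hyd
      have hyx : y ≠ x := Finset.ne_of_mem_erase hyc
      have h2 : 2 ≤ (c ∩ d).card := by
        apply Finset.one_lt_card.mpr
        refine ⟨x, Finset.mem_inter.mpr ⟨(hmem c hc).2, (hmem d hd).2⟩,
          y, Finset.mem_inter.mpr ⟨Finset.mem_of_mem_erase hyc, Finset.mem_of_mem_erase hyd⟩,
          fun h => hyx h.symm⟩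
      have := hA c (hmem c hc).1 d (hmem d hd).1 hcd
      omega
    have hunion : Bx.biUnion (fun b => b.erase x) = X.erase x := by
      apply Finset.Subset.antisymm
      · intro y hy
        obtain ⟨b, hb, hyb⟩ := Finset.mem_biUnion.mp hy
        exact Finset.mem_erase.mpr ⟨Finset.ne_of_mem_erase hyb,
          hsub b (hmem b hb).1 (Finset.mem_of_mem_erase hyb)⟩
      · intro y hy
        obtain ⟨hyx, hyX⟩ := Finset.mem_erase.mp hy
        have h1 := hpair x hx y hyX (Ne.symm hyx)
        have hne : (B.filter (fun b => x ∈ b ∧ y ∈ b)).Nonempty := by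
          rw [← Finset.card_pos]; omega
        obtain ⟨b, hb⟩ := hne
        have hbm := Finset.mem_filter.mp hb
        exact Finset.mem_biUnion.mpr ⟨b, Finset.mem_filter.mpr ⟨hbm.1, hbm.2.1⟩,
          Finset.mem_erase.mpr ⟨hyx, hbm.2.2⟩⟩
    have hcard : (X.erase x).card = ∑ b ∈ Bx, (b.erase x).card := by
      rw [← hunion, Finset.card_biUnion hdisj]
    have hsum : ∑ b ∈ Bx, (b.erase x).card = Bx.card * (r - 1) := by
      rw [Finset.sum_congr rfl (fun b hb => by
        rw [Finset.card_erase_of_mem (hmem b hb).2, hsize b (hmem b hb).1])]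
      simp [Finset.sum_const, Nat.smul_one_eq_cast]
    have hXe : (X.erase x).card = n - 1 := by rw [Finset.card_erase_of_mem hx, hX]
    have hn1 : n - 1 = r * (r - 1) := by omega
    have heq : Bx.card * (r - 1) = r * (r - 1) := by omega
    have hrpos : 0 < r - 1 := by omega
    exact Nat.eq_of_mul_eq_mul_right hrpos heq
  -- Main argument
  intro b₁ hb₁ b₂ hb₂ hne
  have hle := hA b₁ hb₁ b₂ hb₂ hne
  rcases Nat.lt_or_ge 0 ((b₁ ∩ b₂).card) with hpos | hzero
  · omega
  · exfalso
    have hdisj12 : b₁ ∩ b₂ = ∅ := Finset.card_eq_zero.mp (by omega)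
    -- pick x ∈ b₂
    have hb₂ne : b₂.Nonempty := by
      rw [← Finset.card_pos, hsize b₂ hb₂]; omega
    obtain ⟨x, hx⟩ := hb₂ne
    have hxX : x ∈ X := hsub b₂ hb₂ hx
    have hxnb₁ : x ∉ b₁ := by
      intro h
      have : x ∈ b₁ ∩ b₂ := Finset.mem_inter.mpr ⟨h, hx⟩
      rw [hdisj12] at this; exact absurd this (Finset.notMem_empty x)
    set Bx := B.filter (fun b => x ∈ b) with hBxdef
    have hBxcard : Bx.card = r := hcount x hxX
    -- For each y ∈ b₁, choose the block containing x and y.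
    set f : α → Finset α := fun y =>
      if h : (B.filter (fun b => x ∈ b ∧ y ∈ b)).Nonempty then h.choose else ∅ with hfdef
    have hfprop : ∀ y ∈ b₁, f y ∈ B ∧ x ∈ f y ∧ y ∈ f y := by
      intro y hy
      have hyX : y ∈ X := hsub b₁ hb₁ hy
      have hxy : x ≠ y := fun h => hxnb₁ (h ▸ hy)
      have h1 := hpair x hxX y hyX hxy
      have hne' : (B.filter (fun b => x ∈ b ∧ y ∈ b)).Nonempty := by
        rw [← Finset.card_pos]; omega
      have : f y ∈ B.filter (fun b => x ∈ b ∧ y ∈ b) := by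
        rw [hfdef]; simp only [dif_pos hne']; exact hne'.choose_spec
      have h2 := Finset.mem_filter.mp this
      exact ⟨h2.1, h2.2.1, h2.2.2⟩
    have hmaps : ∀ y ∈ b₁, f y ∈ Bx.erase b₂ := by
      intro y hy
      obtain ⟨h1, h2, h3⟩ := hfprop y hy
      refine Finset.mem_erase.mpr ⟨?_, Finset.mem_filter.mpr ⟨h1, h2⟩⟩
      intro heq
      have : y ∈ b₁ ∩ b₂ := Finset.mem_inter.mpr ⟨hy, heq ▸ h3⟩
      rw [hdisj12] at this; exact absurd this (Finset.notMem_empty y)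
    have hinj : ∀ y₁ ∈ b₁, ∀ y₂ ∈ b₁, f y₁ = f y₂ → y₁ = y₂ := by
      intro y₁ hy₁ y₂ hy₂ hfeq
      by_contra hne'
      obtain ⟨h1, h2, h3⟩ := hfprop y₁ hy₁
      obtain ⟨h1', h2', h3'⟩ := hfprop y₂ hy₂
      have hfne : f y₁ ≠ b₁ := fun h => hxnb₁ (h ▸ h2)
      have h4 : 2 ≤ (f y₁ ∩ b₁).card := by
        apply Finset.one_lt_card.mpr
        exact ⟨y₁, Finset.mem_inter.mpr ⟨h3, hy₁⟩,
          y₂, Finset.mem_inter.mpr ⟨hfeq ▸ h3', hy₂⟩, hne'⟩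
      have := hA (f y₁) h1 b₁ hb₁ hfne
      omega
    have hcardle : b₁.card ≤ (Bx.erase b₂).card :=
      Finset.card_le_card_of_injOn f hmaps (fun y₁ h₁ y₂ h₂ h => hinj y₁ h₁ y₂ h₂ h)
    have hb₂Bx : b₂ ∈ Bx := Finset.mem_filter.mpr ⟨hb₂, hx⟩
    have : (Bx.erase b₂).card = r - 1 := by
      rw [Finset.card_erase_of_mem hb₂Bx, hBxcard]
    have := hsize b₁ hb₁
    omega
end

section
/- For every natural number r ≥ 2, setting n = r(r−1) + 1, the inequality 3n/(r(2r² + 1)) ≤ n/(r(2r − 1)) holds (in the rationals), with equality if and only if r = 2; that is, the redundancy diversity factor of round-robin scheduling never exceeds that of BIBD scheduling: RDF_round-robin ≤ RDF_BIBD, with equality only for r = 2. -/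
/-- For `r ≥ 2` and `n = r(r-1) + 1`, one has `3n/(r(2r² + 1)) ≤ n/(r(2r - 1))` in
the rationals, with equality iff `r = 2`: `RDF_round-robin ≤ RDF_BIBD`, with equality
only for `r = 2`. -/
theorem rdf_round_robin_le_rdf_bibd (r n : ℕ) (hr : 2 ≤ r)
    (hn : n = r * (r - 1) + 1) :
    (3 * (n : ℚ)) / (r * (2 * r ^ 2 + 1)) ≤ (n : ℚ) / (r * (2 * r - 1)) ∧
      ((3 * (n : ℚ)) / (r * (2 * r ^ 2 + 1)) = (n : ℚ) / (r * (2 * r - 1)) ↔ r = 2) := by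
  have hq2 : (2 : ℚ) ≤ (r : ℚ) := by exact_mod_cast hr
  have hn' : (n : ℚ) = (r : ℚ) * ((r : ℚ) - 1) + 1 := by
    subst hn
    push_cast [Nat.cast_sub (by omega : 1 ≤ r)]
    ring
  have hnpos : (0 : ℚ) < n := by nlinarith
  have h1 : (0 : ℚ) < (r : ℚ) * (2 * (r : ℚ) ^ 2 + 1) := by nlinarith
  have h2 : (0 : ℚ) < (r : ℚ) * (2 * (r : ℚ) - 1) := by nlinarith
  constructor
  · rw [div_le_div_iff₀ h1 h2]
    nlinarith [mul_nonneg (mul_nonneg (sub_nonneg.2 hq2) (by nlinarith : (0:ℚ) ≤ (r:ℚ) - 1)) hnpos.le]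
  · rw [div_eq_div_iff h1.ne' h2.ne']
    constructor
    · intro h
      have hne : (n : ℚ) ≠ 0 := ne_of_gt hnpos
      have hrne : (r : ℚ) ≠ 0 := by nlinarith
      have hfac : ((r : ℚ) - 2) * ((r : ℚ) - 1) = 0 := by
        apply mul_left_cancel₀ (show (2 : ℚ) * n * r ≠ 0 by
          exact mul_ne_zero (mul_ne_zero two_ne_zero hne) hrne)
        linear_combination -h
      have : (r : ℚ) = 2 := by
        rcases mul_eq_zero.1 hfac with h' | h'
        · linarith
        · nlinarith
      exact_mod_cast this
    · rintro rfl
      subst hn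
      norm_num
end
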